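/- Let each f_t : ℝ^d → ℝ, t = 1, …, T, be convex and differentiable with ‖∇f_t(w)‖ ≤ G for all w ∈ 𝒟, let w_1 ∈ 𝒟, and define iterates of online gradient descent by w_{t+1} = Π(w_t − η·∇f_t(w_t)) with step size η = D/(G√T). If the switching budget S satisfies D√T ≤ S ≤ D·T, then the continuous switching constraint Σ_{t=2}^T ‖w_t − w_{t−1}‖ ≤ S holds, and the regret satisfies R = Σ_{t=1}^T f_t(w_t) − min_{w ∈ 𝒟} Σ_{t=1}^T f_t(w) ≤ D·G·√T. -/

import Mathlib

open scoped InnerProductSpace BigOperators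

noncomputable def ballProj (d : ℕ) (D : ℝ) (p : EuclideanSpace ℝ (Fin d)) :
    EuclideanSpace ℝ (Fin d) :=
  if ‖p‖ ≤ D / 2 then p else (D / (2 * ‖p‖)) • p

lemma ballProj_norm_le {d : ℕ} {D : ℝ} (hD : 0 ≤ D) (p : EuclideanSpace ℝ (Fin d)) :
    ‖ballProj d D p‖ ≤ D / 2 := by
  unfold ballProj
  split_ifs with h
  · exact h
  · push_neg at h
    have hp0 : 0 < ‖p‖ := lt_of_le_of_lt (by linarith) h
    rw [norm_smul, Real.norm_eq_abs, abs_of_nonneg (by positivity)]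
    apply le_of_eq
    field_simp

lemma ballProj_nonexp {d : ℕ} {D : ℝ} (hD : 0 ≤ D) (p q : EuclideanSpace ℝ (Fin d))
    (hq : ‖q‖ ≤ D / 2) : ‖ballProj d D p - q‖ ≤ ‖p - q‖ := by
  unfold ballProj
  split_ifs with h
  · exact le_rfl
  · push_neg at h
    have hp0 : 0 < ‖p‖ := lt_of_le_of_lt (by linarith) h
    set c : ℝ := D / (2 * ‖p‖) with hc
    have hc0 : 0 ≤ c := by positivity
    have hcp : c * ‖p‖ = D / 2 := by rw [hc, div_mul_eq_mul_div, mul_div_mul_right _ _ hp0.ne']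
    have hc1 : c ≤ 1 := by
      rw [hc, div_le_one (by positivity)]; linarith
    have hiq : ⟪p, q⟫_ℝ ≤ ‖p‖ * (D / 2) :=
      (real_inner_le_norm p q).trans (by nlinarith [norm_nonneg q])
    have key : ‖c • p - q‖ ^ 2 ≤ ‖p - q‖ ^ 2 := by
      rw [norm_sub_sq_real, norm_sub_sq_real, norm_smul, real_inner_smul_left,
        Real.norm_eq_abs, abs_of_nonneg hc0]
      nlinarith [hiq, sq_nonneg (1 - c), norm_nonneg p]
    have := Real.sqrt_le_sqrt key
    rwa [Real.sqrt_sq (norm_nonneg _), Real.sqrt_sq (norm_nonneg _)] at this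

lemma grad_ineq {d : ℕ} {f : EuclideanSpace ℝ (Fin d) → ℝ}
    (hc : ConvexOn ℝ Set.univ f) (hd : Differentiable ℝ f)
    (x y : EuclideanSpace ℝ (Fin d)) :
    f x + ⟪gradient f x, y - x⟫_ℝ ≤ f y := by
  set φ : ℝ → ℝ := fun s => f (x + s • (y - x)) with hφ
  have hφ1 : φ 1 = f y := by simp [hφ]
  have hφ0 : φ 0 = f x := by simp [hφ]
  have hφc : ConvexOn ℝ Set.univ φ := by
    have := hc.comp_affineMap (AffineMap.lineMap x y)
    rw [Set.preimage_univ] at this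
    have heq : φ = f ∘ AffineMap.lineMap x y := by
      funext s
      simp [hφ, AffineMap.lineMap_apply]
      congr 1
      module
    rw [heq]; exact this
  have hcurve : HasDerivAt (fun s : ℝ => x + s • (y - x)) (y - x) 0 := by
    simpa using ((hasDerivAt_id (0:ℝ)).smul_const (y - x)).const_add x
  have hgrad : HasFDerivAt f (InnerProductSpace.toDual ℝ _ (gradient f x)) x :=
    (hasGradientAt_iff_hasFDerivAt.mp (hd x).hasGradientAt)
  have hderiv : HasDerivAt φ ⟪gradient f x, y - x⟫_ℝ 0 := by
    have hgrad' : HasFDerivAt f (InnerProductSpace.toDual ℝ _ (gradient f x))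
        ((fun s : ℝ => x + s • (y 
- x)) 0) := by simpa using hgrad
    have h := hgrad'.comp_hasDerivAt 0 hcurve
    rw [InnerProductSpace.toDual_apply_apply] at h
    exact h
  have := hφc.le_slope_of_hasDerivWithinAt (Set.mem_univ 0) (Set.mem_univ 1)
    zero_lt_one hderiv.hasDerivWithinAt
  rw [slope_def_field, hφ1, hφ0] at this
  have h10 : ((1:ℝ) - 0) = 1 := by norm_num
  rw [h10, div_one] at this
  linarith

set_option maxHeartbeats 1000000

lemma telescope_Icc (a : ℕ → ℝ) (T : ℕ) :
    ∑ t ∈ Finset.Icc 1 T, (a t - a (t + 1)) = a 1 - a (T + 1) := by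
  induction T with
  | zero => simp
  | succ n ih => rw [Finset.sum_Icc_succ_top (by omega), ih]; ring

theorem stmt8 (d T : ℕ) (hT : 1 ≤ T) (D G S : ℝ) (hD : 0 < D) (hG : 0 < G)
    (hSlow : D * Real.sqrt T ≤ S) (hShigh : S ≤ D * T)
    (f : ℕ → EuclideanSpace ℝ (Fin d) → ℝ)
    (hconv : ∀ t ∈ Finset.Icc 1 T, ConvexOn ℝ Set.univ (f t))
    (hdiff : ∀ t ∈ Finset.Icc 1 T, Differentiable ℝ (f t))
    (hgrad : ∀ t ∈ Finset.Icc 1 T,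
      ∀ v ∈ Metric.closedBall (0 : EuclideanSpace ℝ (Fin d)) (D / 2), ‖gradient (f t) v‖ ≤ G)
    (η : ℝ) (hη : η = D / (G * Real.sqrt T))
    (w : ℕ → EuclideanSpace ℝ (Fin d))
    (hw1 : w 1 ∈ Metric.closedBall (0 : EuclideanSpace ℝ (Fin d)) (D / 2))
    (hupd : ∀ t ∈ Finset.Icc 1 (T - 1), w (t + 1) = ballProj d D (w t - η • gradient (f t) (w t))) :
    (∑ t ∈ Finset.Icc 2 T, ‖w t - w (t - 1)‖ ≤ S) ∧
    (∑ t ∈ Finset.Icc 1 T, f t (w t)) -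
        (⨅ v : Metric.closedBall (0 : EuclideanSpace ℝ (Fin d)) (D / 2),
          ∑ t ∈ Finset.Icc 1 T, f t (v : EuclideanSpace ℝ (Fin d))) ≤
      D * G * Real.sqrt T := by
  have hT0 : (0:ℝ) < (T:ℝ) := by exact_mod_cast Nat.pos_of_ne_zero (by omega)
  have hsT : 0 < Real.sqrt T := Real.sqrt_pos.mpr hT0
  have hsqT : Real.sqrt T * Real.sqrt T = (T:ℝ) := Real.mul_self_sqrt hT0.le
  have hη0 : 0 < η := by rw [hη]; positivity
  have hw1' : ‖w 1‖ ≤ D / 2 := by simpa [mem_closedBall_zero_iff] using hw1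
  -- membership of iterates
  have hmem : ∀ t, 1 ≤ t → (t ≤ T → ‖w t‖ ≤ D / 2) := by
    intro t ht
    induction t, ht using Nat.le_induction with
    | base => intro _; exact hw1'
    | succ n hn ih =>
      intro hnT
      rw [hupd n (Finset.mem_Icc.mpr ⟨hn, by omega⟩)]
      exact ballProj_norm_le hD.le _
  -- Part 1: switching
  have step1 : ∀ t ∈ Finset.Icc 2 T, ‖w t - w (t - 1)‖ ≤ D / Real.sqrt T := by
    intro t ht
    obtain ⟨h2, hT'⟩ := Finset.mem_Icc.mp ht
    set s := t - 1 with hs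
    have hts : t = s + 1 := by omega
    have hs1 : 1 ≤ s := by omega
    have hsT' : s ≤ T := by omega
    have hws : ‖w s‖ ≤ D / 2 := hmem s hs1 hsT'
    rw [hts, hupd s (Finset.mem_Icc.mpr ⟨hs1, by omega⟩)]
    have hnon := ballProj_nonexp (d := d) hD.le (w s - η • gradient (f s) (w s)) (w s) hws
    have heq : w s - η • gradient (f s) (w s) - w s = -(η • gradient (f s) (w s)) := by abel
    rw [heq, norm_neg, norm_smul, Real.norm_eq_abs, abs_of_nonneg hη0.le] at hnon
    have hgb : ‖gradient (f s) (w s)‖ ≤ G :=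
      hgrad s (Finset.mem_Icc.mpr ⟨hs1, hsT'⟩) (w s) (mem_closedBall_zero_iff.mpr hws)
    have : η * ‖gradient (f s) (w s)‖ ≤ η * G := by nlinarith
    have hηG : η * G = D / Real.sqrt T := by rw [hη]; field_simp
    linarith
  have part1 : ∑ t ∈ Finset.Icc 2 T, ‖w t - w (t - 1)‖ ≤ S := by
    have hcard := Finset.sum_le_card_nsmul _ _ _ step1
    rw [Nat.card_Icc, nsmul_eq_mul] at hcard
    have hcast : ((T + 1 - 2 : ℕ) : ℝ) ≤ (T : ℝ) := by
      have : T + 1 - 2 ≤ T := by omega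
      exact_mod_cast this
    have hTd : (T:ℝ) * (D / Real.sqrt T) = D * Real.sqrt T := by
      field_simp
      linear_combination -hsqT
    have : ((T + 1 - 2 : ℕ) : ℝ) * (D / Real.sqrt T) ≤ (T:ℝ) * (D / Real.sqrt T) := by
      apply mul_le_mul_of_nonneg_right hcast (by positivity)
    linarith
  -- auxiliary sequence extending w by one step
  set u : ℕ → EuclideanSpace ℝ (Fin d) :=
    fun t => if t ≤ T then w t else ballProj d D (w T - η • gradient (f T) (w T)) with hu
  have huw : ∀ t, t ≤ T → u t = w t := fun t h => if_pos h
  have hupd' : ∀ t, 1 ≤ t → t ≤ T →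
      u (t + 1) = ballProj d D (u t - η • gradient (f t) (u t)) := by
    intro t h1 h2
    rcases lt_or_eq_of_le h2 with hlt | heq
    · rw [huw (t+1) (by omega), huw t h2, hupd t (Finset.mem_Icc.mpr ⟨h1, by omega⟩)]
    · subst heq
      rw [huw t le_rfl]
      show (if t + 1 ≤ t then w (t+1) else _) = _
      rw [if_neg (by omega)]
  have humem : ∀ t, 1 ≤ t → t ≤ T + 1 → ‖u t‖ ≤ D / 2 := by
    intro t h1 h2
    by_cases h : t ≤ T
    · rw [huw t h]; exact hmem t h1 h
    · have : t = T + 1 := by omega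
      subst this
      show ‖(if T + 1 ≤ T then w (T+1) else ballProj d D _)‖ ≤ D / 2
      rw [if_neg (by omega)]
      exact ballProj_norm_le hD.le _
  -- per-step regret bound
  have key : ∀ v : EuclideanSpace ℝ (Fin d), ‖v‖ ≤ D / 2 → ∀ t, 1 ≤ t → t ≤ T →
      f t (u t) - f t v ≤
        (‖u t - v‖ ^ 2 - ‖u (t + 1) - v‖ ^ 2) / (2 * η) + η * G ^ 2 / 2 := by
    intro v hv t h1 h2
    have htI : t ∈ Finset.Icc 1 T := Finset.mem_Icc.mpr ⟨h1, h2⟩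
    set g := gradient (f t) (u t) with hgdef
    have hub : ‖u t‖ ≤ D / 2 := humem t h1 (by omega)
    have hgb : ‖g‖ ≤ G := hgrad t htI _ (mem_closedBall_zero_iff.mpr hub)
    have hineq : f t (u t) - f t v ≤ ⟪g, u t - v⟫_ℝ := by
      have h := grad_ineq (hconv t htI) (hdiff t htI) (u t) v
      have h2' : ⟪g, u t - v⟫_ℝ = -⟪g, v - u t⟫_ℝ := by
        rw [← inner_neg_right, neg_sub]
      rw [h2']
      linarith
    have hproj : ‖u (t + 1) - v‖ ≤ ‖u t - η • g - v‖ := by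
      rw [hupd' t h1 h2]
      exact ballProj_nonexp hD.le _ _ hv
    have hexp : ‖u t - η • g - v‖ ^ 2 =
        ‖u t - v‖ ^ 2 - 2 * η * ⟪g, u t - v⟫_ℝ + η ^ 2 * ‖g‖ ^ 2 := by
      have hre : u t - η • g - v = (u t - v) - η • g := by abel
      rw [hre, norm_sub_sq_real, real_inner_smul_right, real_inner_comm, norm_smul,
        Real.norm_eq_abs, mul_pow, sq_abs]
      ring
    have hsq : ‖u (t + 1) - v‖ ^ 2 ≤ ‖u t - η • g - v‖ ^ 2 :=
      pow_le_pow_left₀ (norm_nonneg _) hproj 2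
    have hG2 : ‖g‖ ^ 2 ≤ G ^ 2 := by nlinarith [norm_nonneg g]
    have h2η : (0:ℝ) < 2 * η := by positivity
    set A := ‖u t - v‖ ^ 2
    set B := ‖u (t + 1) - v‖ ^ 2
    set I := ⟪g, u t - v⟫_ℝ
    have hgsq : η ^ 2 * ‖g‖ ^ 2 ≤ η ^ 2 * G ^ 2 :=
      mul_le_mul_of_nonneg_left hG2 (sq_nonneg η)
    have e1 : 2 * η * I ≤ A - B + η ^ 2 * G ^ 2 := by linarith
    have e3 : (f t (u t) - f t v) * (2 * η) ≤ I * (2 * η) :=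
      mul_le_mul_of_nonneg_right hineq h2η.le
    have hsplit : (A - B) / (2 * η) + η * G ^ 2 / 2 = (A - B + η ^ 2 * G ^ 2) / (2 * η) := by
      field_simp
    rw [hsplit, le_div_iff₀ h2η]
    linarith
  -- summed regret bound against any v in the ball
  have sum1 : ∀ v : EuclideanSpace ℝ (Fin d), ‖v‖ ≤ D / 2 →
      (∑ t ∈ Finset.Icc 1 T, f t (w t)) - D * G * Real.sqrt T ≤
        ∑ t ∈ Finset.Icc 1 T, f t v := by
    intro v hv
    set a : ℕ → ℝ := fun t => ‖u t - v‖ ^ 2 with ha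
    have hsum : ∑ t ∈ Finset.Icc 1 T, (f t (u t) - f t v) ≤
        ∑ t ∈ Finset.Icc 1 T, ((a t - a (t + 1)) / (2 * η) + η * G ^ 2 / 2) :=
      Finset.sum_le_sum fun t ht =>
        key v hv t (Finset.mem_Icc.mp ht).1 (Finset.mem_Icc.mp ht).2
    have htel : ∑ t ∈ Finset.Icc 1 T, (a t - a (t + 1)) = a 1 - a (T + 1) :=
      telescope_Icc a T
    have hdist : ∑ t ∈ Finset.Icc 1 T, ((a t - a (t + 1)) / (2 * η) + η * G ^ 2 / 2) =
        (a 1 - a (T + 1)) / (2 * η) + (T : ℝ) * (η * G ^ 2 / 2) := by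
      rw [Finset.sum_add_distrib, ← Finset.sum_div, htel, Finset.sum_const, Nat.card_Icc,
        nsmul_eq_mul]
      norm_num
    have ha1 : a 1 ≤ D ^ 2 := by
      show ‖u 1 - v‖ ^ 2 ≤ D ^ 2
      have h1 : ‖u 1 - v‖ ≤ D := by
        have := humem 1 le_rfl (by omega)
        calc ‖u 1 - v‖ ≤ ‖u 1‖ + ‖v‖ := norm_sub_le _ _
          _ ≤ D := by linarith
      nlinarith [norm_nonneg (u 1 - v)]
    have haT : 0 ≤ a (T + 1) := sq_nonneg _
    have harith : D ^ 2 / (2 * η) + (T : ℝ) * (η * G ^ 2 / 2) = D * G * Real.sqrt T := by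
      rw [hη]
      field_simp
      ring_nf
      rw [Real.sq_sqrt hT0.le]
      ring
    have hfw : ∑ t ∈ Finset.Icc 1 T, f t (u t) = ∑ t ∈ Finset.Icc 1 T, f t (w t) :=
      Finset.sum_congr rfl fun t ht => by rw [huw t (Finset.mem_Icc.mp ht).2]
    have hbound : (a 1 - a (T + 1)) / (2 * η) ≤ D ^ 2 / (2 * η) := by
      gcongr
      linarith
    rw [Finset.sum_sub_distrib, hfw] at hsum
    rw [hdist] at hsum
    linarith
  -- conclude part 2
  refine ⟨part1, ?_⟩
  rw [sub_le_comm]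
  have hne : Nonempty (Metric.closedBall (0 : EuclideanSpace ℝ (Fin d)) (D / 2)) :=
    ⟨⟨0, by simp [mem_closedBall_zero_iff]; positivity⟩⟩
  apply le_ciInf
  intro v
  exact sum1 v (mem_closedBall_zero_iff.mp v.2)
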